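/- With the setup of the map f_k(d) = ρ'_k · ĝ_kᴴ F(d)⁻¹ ĝ_k where F(d) = α·∑_{k'} (ρ'_{k'} u_{k'} / d_{k'})·J_{k'} + I_M, each J_{k'} Hermitian positive definite, and all constants positive: if d, d' ∈ ℝ_{>0}^K satisfy d ≥ d' componentwise, then F(d') − F(d) is positive semidefinite, hence F(d)⁻¹ − F(d')⁻¹ is positive semidefinite, and therefore f_k(d) ≥ f_k(d') for all k (monotonicity of the interference function). -/

import Mathlib

open Matrix
open scoped ComplexOrder
variable {n : Type*} [Fintype n] [DecidableEq n]

lemma aux0 {C : Matrix n n ℂ} (hC : C.PosSemidef) (hCd : IsUnit C.det)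
    (h1 : ((1 : Matrix n n ℂ) - C).PosSemidef) : (C⁻¹ - 1).PosSemidef := by
  have hCi : C⁻¹.PosSemidef := hC.inv
  set T := (open scoped MatrixOrder in CFC.sqrt C⁻¹) with hTdef
  have hT : T * T = C⁻¹ := by open scoped MatrixOrder in exact CFC.sqrt_mul_sqrt_self _ hCi.nonneg
  have hTH : Tᴴ = T := by open scoped MatrixOrder in exact (CFC.sqrt_nonneg _).posSemidef.isHermitian
  have hTd : IsUnit T.det := by
    have h2 : T.det * T.det = C⁻¹.det := by rw [← det_mul, hT]
    have hu : IsUnit C⁻¹.det := isUnit_nonsing_inv_det C hCd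
    rw [← h2] at hu
    exact isUnit_of_mul_isUnit_left hu
  have hTC : T⁻¹ * T⁻¹ = C := by
    rw [← Matrix.mul_inv_rev, hT, Matrix.nonsing_inv_nonsing_inv _ hCd]
  have hTCT : T * C * T = 1 := by
    rw [← hTC, ← Matrix.mul_assoc, Matrix.mul_nonsing_inv _ hTd,
      Matrix.one_mul, Matrix.nonsing_inv_mul _ hTd]
  have key : C⁻¹ - 1 = T * (1 - C) * T := by
    rw [Matrix.mul_sub, Matrix.mul_one, Matrix.sub_mul, hT, hTCT]
  have := h1.mul_mul_conjTranspose_same T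
  rw [hTH, ← key] at this
  exact this

lemma aux1 {A B : Matrix n n ℂ} (hA : A.PosDef) (hB : B.PosDef)
    (h : (B - A).PosSemidef) : (A⁻¹ - B⁻¹).PosSemidef := by
  have hAd : IsUnit A.det := (Matrix.isUnit_iff_isUnit_det A).mp hA.isUnit
  have hBd : IsUnit B.det := (Matrix.isUnit_iff_isUnit_det B).mp hB.isUnit
  have hBi : B⁻¹.PosSemidef := hB.inv.posSemidef
  set R := (open scoped MatrixOrder in CFC.sqrt B⁻¹) with hRdef
  have hR : R * R = B⁻¹ := by open scoped MatrixOrder in exact CFC.sqrt_mul_sqrt_self _ hBi.nonneg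
  have hRH : Rᴴ = R := by open scoped MatrixOrder in exact (CFC.sqrt_nonneg _).posSemidef.isHermitian
  have hRd : IsUnit R.det := by
    have h2 : R.det * R.det = B⁻¹.det := by rw [← det_mul, hR]
    have hu : IsUnit B⁻¹.det := isUnit_nonsing_inv_det B hBd
    rw [← h2] at hu
    exact isUnit_of_mul_isUnit_left hu
  have hRR : R⁻¹ * R⁻¹ = B := by
    rw [← Matrix.mul_inv_rev, hR, Matrix.nonsing_inv_nonsing_inv _ hBd]
  have hRBR : R * B * R = 1 := by
    rw [← hRR, ← Matrix.mul_assoc, Matrix.mul_nonsing_inv _ hRd,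
      Matrix.one_mul, Matrix.nonsing_inv_mul _ hRd]
  set C := R * A * R with hCdef
  have hC : C.PosSemidef := by
    have := hA.posSemidef.mul_mul_conjTranspose_same R
    rwa [hRH] at this
  have hCd : IsUnit C.det := by
    rw [hCdef, det_mul, det_mul]
    exact (hRd.mul hAd).mul hRd
  have h1C : ((1 : Matrix n n ℂ) - C).PosSemidef := by
    have key : (1 : Matrix n n ℂ) - C = R * (B - A) * R := by
      rw [Matrix.mul_sub, Matrix.sub_mul, hRBR]
    have := h.mul_mul_conjTranspose_same R
    rw [hRH, ← key] at this
    exact this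
  have hmain := aux0 hC hCd h1C
  have key : A⁻¹ - B⁻¹ = R * (C⁻¹ - 1) * R := by
    have hCi : C⁻¹ = R⁻¹ * A⁻¹ * R⁻¹ := by
      rw [hCdef, Matrix.mul_inv_rev, Matrix.mul_inv_rev, Matrix.mul_assoc]
    rw [Matrix.mul_sub, Matrix.mul_one, Matrix.sub_mul, hR, hCi]
    congr 1
    rw [← Matrix.mul_assoc, ← Matrix.mul_assoc, Matrix.mul_nonsing_inv _ hRd,
      Matrix.one_mul, Matrix.mul_assoc, Matrix.nonsing_inv_mul _ hRd, Matrix.mul_one]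
  have := hmain.mul_mul_conjTranspose_same R
  rw [hRH, ← key] at this
  exact this

lemma psd_smul' {A : Matrix n n ℂ} (hA : A.PosSemidef) {c : ℝ} (hc : 0 ≤ c) :
    ((c : ℂ) • A).PosSemidef := by
  refine Matrix.PosSemidef.of_dotProduct_mulVec_nonneg ?_ (fun x => ?_)
  · unfold Matrix.IsHermitian
    rw [conjTranspose_smul, hA.isHermitian.eq]
    norm_num
  · rw [smul_mulVec, dotProduct_smul, smul_eq_mul]
    exact mul_nonneg (Complex.zero_le_real.mpr hc) (hA.dotProduct_mulVec_nonneg x)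


lemma sum_psd {K : ℕ} (c : Fin K → ℝ) (hc : ∀ k, 0 ≤ c k)
    (J : Fin K → Matrix n n ℂ) (hJ : ∀ k, (J k).PosSemidef) :
    (∑ k, ((c k : ℝ) : ℂ) • J k).PosSemidef := by
  apply Finset.sum_induction _ Matrix.PosSemidef
    (fun a b ha hb => ha.add hb) (Matrix.PosSemidef.zero (n := n) (R := ℂ))
  intro k _
  exact psd_smul' (hJ k) (hc k)

theorem stmt9 {M K : ℕ} (α : ℝ) (hα : 0 < α)
    (ρ' u : Fin K → ℝ) (hρ' : ∀ k, 0 < ρ' k) (hu : ∀ k, 0 < u k)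
    (g : Fin K → Fin M → ℂ) (J : Fin K → Matrix (Fin M) (Fin M) ℂ)
    (hJ : ∀ k', (J k').PosDef)
    (F : (Fin K → ℝ) → Matrix (Fin M) (Fin M) ℂ)
    (hF : ∀ d, F d = (α : ℂ) • ∑ k', ((ρ' k' * u k' / d k' : ℝ) : ℂ) • J k'
      + (1 : Matrix (Fin M) (Fin M) ℂ))
    (d d' : Fin K → ℝ) (hd : ∀ k', 0 < d k') (hd' : ∀ k', 0 < d' k')
    (hdd : ∀ k', d' k' ≤ d k') :
    (F d' - F d).PosSemidef ∧ ((F d)⁻¹ - (F d')⁻¹).PosSemidef ∧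
      ∀ k, ρ' k * (star (g k) ⬝ᵥ (F d')⁻¹.mulVec (g k)).re ≤
        ρ' k * (star (g k) ⬝ᵥ (F d)⁻¹.mulVec (g k)).re := by
  -- sums are PSD
  have hsum : ∀ (e : Fin K → ℝ), (∀ k', 0 < e k') →
      (∑ k', ((ρ' k' * u k' / e k' : ℝ) : ℂ) • J k').PosSemidef := by
    intro e he
    exact sum_psd _ (fun k => le_of_lt (div_pos (mul_pos (hρ' k) (hu k)) (he k))) _
      (fun k => (hJ k).posSemidef)
  -- F is PosDef
  have hFpos : ∀ (e : Fin K → ℝ), (∀ k', 0 < e k') → (F e).PosDef := by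
    intro e he
    rw [hF e]
    exact Matrix.PosDef.posSemidef_add (psd_smul' (hsum e he) hα.le) (Matrix.PosDef.one (n := Fin M) (R := ℂ))
  -- the difference is PSD
  have hdiff : (F d' - F d).PosSemidef := by
    have key : F d' - F d =
        (α : ℂ) • ∑ k', (((ρ' k' * u k' / d' k' - ρ' k' * u k' / d k' : ℝ)) : ℂ) • J k' := by
      rw [hF d', hF d]
      simp only [Complex.ofReal_sub, sub_smul, Finset.sum_sub_distrib, smul_sub]
      abel
    rw [key]
    refine psd_smul' ?_ hα.le
    refine sum_psd _ (fun k => ?_) _ (fun k => (hJ k).posSemidef)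
    have hle : ρ' k * u k / d k ≤ ρ' k * u k / d' k := by
      rw [div_le_div_iff₀ (hd k) (hd' k)]
      exact mul_le_mul_of_nonneg_left (hdd k) (le_of_lt (mul_pos (hρ' k) (hu k)))
    linarith
  have hinv : ((F d)⁻¹ - (F d')⁻¹).PosSemidef :=
    aux1 (hFpos d hd) (hFpos d' hd') hdiff
  refine ⟨hdiff, hinv, fun k => ?_⟩
  have h0 := hinv.re_dotProduct_nonneg (g k)
  simp only [sub_mulVec, dotProduct_sub, map_sub, RCLike.re_to_complex] at h0
  have : (star (g k) ⬝ᵥ (F d')⁻¹.mulVec (g k)).re ≤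
      (star (g k) ⬝ᵥ (F d)⁻¹.mulVec (g k)).re := by
    linarith
  exact mul_le_mul_of_nonneg_left this (hρ' k).le
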